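/- Let P be a finitely additive probability function into an ordered field extension K of ℝ with all values in [0,1], and suppose B is partitioned into B_d and B_{>d} with P(B_{>d})/P(B) infinitesimal and P(B) > 0, P(B_d) > 0. Then for any A ⊆ B, st(P(A)/P(B)) = st(P(A ∩ B_d)/P(B_d)). -/

import Mathlib

/-- Only the minimal-rank part matters for standard parts: if `B` is partitioned
into `B_d` and `B_{>d}` with `P(B_{>d})/P(B)` infinitesimal, then for any
`A ⊆ B`, `st(P(A)/P(B)) = st(P(A ∩ B_d)/P(B_d))`. -/
theorem stmt18 {Ω : Type*} {K : Type*} [Field K] [LinearOrder K] [IsStrictOrderedRing K]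
    (ι : ℝ →+* K) (hι : StrictMono ι)
    (st : K → ℝ)
    (hst : ∀ x : K, 0 ≤ x → x ≤ 1 → ∀ m : ℕ, 0 < m → |x - ι (st x)| < ι (1 / m))
    (P : Set Ω → K)
    (hadd : ∀ A B : Set Ω, Disjoint A B → P (A ∪ B) = P A + P B)
    (hnorm : P Set.univ = 1)
    (hrange : ∀ A : Set Ω, 0 ≤ P A ∧ P A ≤ 1)
    (B Bd Bgt : Set Ω)
    (hB : B = Bd ∪ Bgt) (hBdisj : Disjoint Bd Bgt)
    (hPB : 0 < P B) (hPBd : 0 < P Bd)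
    (hinf : ∀ n : ℕ, 0 < n → P Bgt / P B < ι (1 / n)) :
    ∀ A : Set Ω, A ⊆ B → st (P A / P B) = st (P (A ∩ Bd) / P Bd) := by
  have habs : ∀ r : ℝ, ι |r| = |ι r| := by
    intro r
    rcases abs_cases r with ⟨h1, h2⟩ | ⟨h1, h2⟩
    · rw [h1, abs_of_nonneg]
      rw [← map_zero ι]; exact hι.monotone h2
    · rw [h1, map_neg, abs_of_nonpos]
      rw [← map_zero ι]; exact hι.monotone (le_of_lt h2)
  have mono : ∀ S T : Set Ω, S ⊆ T → P S ≤ P T := by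
    intro S T hST
    have : T = S ∪ (T \ S) := (Set.union_diff_cancel hST).symm
    rw [this, hadd S (T \ S) (disjoint_sdiff_self_right)]
    linarith [(hrange (T \ S)).1]
  intro A hA
  have hb := hPB.ne'
  have hd := hPBd.ne'
  set a := P (A ∩ Bd) with ha_def
  set g := P (A ∩ Bgt) with hg_def
  set G := P Bgt with hG_def
  have hsplitA : P A = a + g := by
    have hA' : A = (A ∩ Bd) ∪ (A ∩ Bgt) := by
      rw [← Set.inter_union_distrib_left, ← hB, Set.inter_eq_left.mpr hA]
    rw [hA']
    exact hadd _ _ (hBdisj.mono Set.inter_subset_right Set.inter_subset_right)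
  have hsplitB : P B = P Bd + G := by rw [hB]; exact hadd _ _ hBdisj
  set x := P A / P B with hx_def
  set y := a / P Bd with hy_def
  have hx0 : 0 ≤ x := div_nonneg (hrange A).1 hPB.le
  have hx1 : x ≤ 1 := (div_le_one hPB).mpr (mono A B hA)
  have hy0 : 0 ≤ y := div_nonneg (hrange _).1 hPBd.le
  have hy1 : y ≤ 1 := (div_le_one hPBd).mpr (mono _ _ Set.inter_subset_right)
  have hg0 : 0 ≤ g := (hrange _).1
  have hgG : g ≤ G := mono _ _ Set.inter_subset_right
  have hG0 : 0 ≤ G := (hrange _).1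
  have heq : x - y = g / P B - y * (G / P B) := by
    have hbd : P Bd + G ≠ 0 := by rw [← hsplitB]; exact hb
    rw [hx_def, hy_def, hsplitA, hsplitB]
    field_simp
    ring
  have hbound : |x - y| ≤ 2 * (G / P B) := by
    rw [heq]
    have h1 : |g / P B - y * (G / P B)| ≤ |g / P B| + |y * (G / P B)| :=
      abs_sub _ _
    have h2 : |g / P B| = g / P B := abs_of_nonneg (div_nonneg hg0 hPB.le)
    have h3 : |y * (G / P B)| = y * (G / P B) :=
      abs_of_nonneg (mul_nonneg hy0 (div_nonneg hG0 hPB.le))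
    have h4 : g / P B ≤ G / P B := by gcongr
    have h5 : y * (G / P B) ≤ 1 * (G / P B) := by
      gcongr
    rw [h2, h3] at h1
    linarith
  have hsmall : ∀ m : ℕ, 0 < m → |x - y| < ι (1 / m) := by
    intro m hm
    have h2m : (0:ℕ) < 2 * m := by positivity
    have := hinf (2 * m) h2m
    have hcast : (2:K) * ι (1 / (2 * m : ℕ)) = ι (1 / m) := by
      rw [← map_ofNat ι 2, ← map_mul]
      congr 1
      push_cast
      field_simp
    calc |x - y| ≤ 2 * (G / P B) := hbound
      _ < 2 * ι (1 / (2 * m : ℕ)) := by linarith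
      _ = ι (1 / m) := hcast
  have hclose : ∀ m : ℕ, 0 < m → |st x - st y| < 3 / m := by
    intro m hm
    have hx' := hst x hx0 hx1 m hm
    have hy' := hst y hy0 hy1 m hm
    have hm' := hsmall m hm
    have hK : |ι (st x) - ι (st y)| < ι (3 / m) := by
      have htri : |ι (st x) - ι (st y)| ≤
          |x - ι (st x)| + |x - y| + |y - ι (st y)| := by
        have := abs_sub_abs_le_abs_sub (ι (st x)) (ι (st y))
        calc |ι (st x) - ι (st y)|
            = |(ι (st x) - x) + (x - y) + (y - ι (st y))| := by ring_nf
          _ ≤ |ι (st x) - x| + |x - y| + |y - ι (st y)| := by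
              exact (abs_add_le _ _).trans (by
                gcongr
                exact abs_add_le _ _)
          _ = |x - ι (st x)| + |x - y| + |y - ι (st y)| := by rw [abs_sub_comm]
      have h3 : ι (1 / m) + ι (1 / m) + ι (1 / m) = ι (3 / m) := by
        rw [← map_add, ← map_add]; congr 1; ring
      linarith
    rw [← map_sub, ← habs] at hK
    exact hι.lt_iff_lt.mp hK
  by_contra hne
  have hpos : 0 < |st x - st y| := abs_pos.mpr (sub_ne_zero.mpr hne)
  obtain ⟨n, hn⟩ := exists_nat_gt (3 / |st x - st y|)
  have hn0 : 0 < n := by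
    by_contra h
    push_neg at h
    interval_cases n
    simp at hn
    linarith [div_pos (show (0:ℝ) < 3 by norm_num) hpos]
  have := hclose n hn0
  have h3 : 3 / (n:ℝ) < |st x - st y| := by
    rw [div_lt_iff₀ (by exact_mod_cast hn0)]
    rw [div_lt_iff₀ hpos] at hn
    linarith
  linarith
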